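/- Let A be an n×n complex block matrix [[A11,A12],[A21,A22]] with A11 invertible. Then det(ppt(A)) = det(A22) / det(A11). -/

import Mathlib

/-- `det (ppt A) = det A22 / det A11`. -/
theorem stmt_4 {k l : Type*} [Fintype k] [Fintype l] [DecidableEq k] [DecidableEq l]
    (A11 : Matrix k k ℂ) (A12 : Matrix k l ℂ) (A21 : Matrix l k ℂ) (A22 : Matrix l l ℂ)
    (h : IsUnit A11.det) :
    (Matrix.fromBlocks A11⁻¹ (-(A11⁻¹ * A12)) (A21 * A11⁻¹)
        (A22 - A21 * A11⁻¹ * A12)).det = A22.det / A11.det := by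
  have hA : Invertible A11 := A11.invertibleOfIsUnitDet h
  haveI : Invertible A11⁻¹ := inferInstance
  rw [Matrix.det_fromBlocks₁₁]
  have h1 : (A11⁻¹)⁻¹ = A11 := Matrix.nonsing_inv_nonsing_inv _ h
  have h2 : A22 - A21 * A11⁻¹ * A12 - A21 * A11⁻¹ * ⅟(A11⁻¹) * -(A11⁻¹ * A12) = A22 := by
    rw [Matrix.invOf_eq_nonsing_inv, h1, Matrix.mul_neg]
    have : A21 * A11⁻¹ * A11 * (A11⁻¹ * A12) = A21 * A11⁻¹ * A12 := by
      rw [Matrix.mul_assoc (A21 * A11⁻¹) A11, ← Matrix.mul_assoc A11,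
        Matrix.mul_nonsing_inv _ h, Matrix.one_mul]
    rw [this]; abel
  rw [h2, Matrix.det_nonsing_inv]
  rw [Ring.inverse_eq_inv, div_eq_inv_mul]
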